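/- arXiv:2308.08524 — 2 statements merged into one kernel-verified Lean document; each statement's English description precedes it below -/
import Mathlib

section
/- Let p(z) = z^s + b_1 z^{s−1} + … + b_s be a monic real polynomial of degree s ≥ 2 whose Hurwitz determinants satisfy: b_s > 0, det(G_1) > 0, …, det(G_{s−2}) > 0 and det(G_{s−1}) = 0. Then there exists a real number ω > 0 such that iω and −iω are simple roots of p (viewed as a complex polynomial), and p has no other roots on the imaginary axis; in particular p has a single pair of purely imaginary roots. -/
open Matrix Polynomial Complex

/-- The `l`-th Hurwitz matrix of a sequence of coefficients `c : ℤ → ℝ`: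
its `(k, j)` entry (1-based) is `c (2k - j)`. -/
noncomputable def hurwitzMatrix (c : ℤ → ℝ) (l : ℕ) : Matrix (Fin l) (Fin l) ℝ :=
  Matrix.of fun k j : Fin l => c (2 * ((k : ℤ) + 1) - ((j : ℤ) + 1))

/-- The Routh reduction step on a coefficient sequence. -/
noncomputable def routhStep (c : ℤ → ℝ) : ℤ → ℝ := fun j =>
  if j % 2 = 0 then c (j + 1) else c (j + 1) - c 0 / c 1 * c (j + 2)

lemma hurwitzMatrix_apply (c : ℤ → ℝ) (l : ℕ) (i j : Fin l) :
    hurwitzMatrix c l i j = c (2 * (i : ℤ) - (j : ℤ) + 1) := by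
  simp [hurwitzMatrix]; ring_nf

lemma det_hurwitz_one (c : ℤ → ℝ) : (hurwitzMatrix c 1).det = c 1 := by
  rw [Matrix.det_fin_one, hurwitzMatrix_apply]
  norm_num

/-- Key determinant recursion for the Routh step. -/
lemma det_routh (c : ℤ → ℝ) (h1 : c 1 ≠ 0) (hneg : ∀ i : ℤ, i < 0 → c i = 0) (k : ℕ) :
    (hurwitzMatrix c (k + 1)).det = c 1 * (hurwitzMatrix (routhStep c) k).det := by
  classical
  set lam : ℝ := c 0 / c 1 with hlam
  -- column operation matrix
  set E : Matrix (Fin (k + 1)) (Fin (k + 1)) ℝ :=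
    (1 : Matrix (Fin (k+1)) (Fin (k+1)) ℝ) +
      Matrix.of (fun i j : Fin (k + 1) =>
        if (i : ℕ) + 1 = (j : ℕ) ∧ (j : ℕ) % 2 = 1 then -lam else 0) with hE
  have hEdet : E.det = 1 := by
    have htri : E.BlockTriangular id := by
      intro i j hij
      simp only [hE, Matrix.add_apply, Matrix.one_apply, Matrix.of_apply]
      have h1 : ¬ (i = j) := by intro h; subst h; exact lt_irrefl _ hij
      have h2 : ¬ ((i : ℕ) + 1 = (j : ℕ) ∧ (j : ℕ) % 2 = 1) := by
        rintro ⟨h, -⟩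
        have : (j : ℕ) < (i : ℕ) := hij
        omega
      simp [h1, h2]
    rw [Matrix.det_of_upperTriangular htri]
    apply Finset.prod_eq_one
    intro i _
    simp [hE, Matrix.one_apply]
  -- the reduced matrix
  set T : Matrix (Fin (k + 1)) (Fin (k + 1)) ℝ :=
    Matrix.of (fun i j : Fin (k + 1) =>
      c (2 * (i : ℤ) - (j : ℤ) + 1) -
        (if (j : ℕ) % 2 = 1 then lam * c (2 * (i : ℤ) - (j : ℤ) + 2) else 0)) with hT
  have hmul : hurwitzMatrix c (k + 1) * E = T := by
    ext i j
    rw [Matrix.mul_apply]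
    rw [hE]
    simp only [Matrix.add_apply, Matrix.of_apply, mul_add]
    rw [Finset.sum_add_distrib]
    have hsum1 : ∑ m : Fin (k+1), hurwitzMatrix c (k+1) i m * (1 : Matrix _ _ ℝ) m j
        = c (2 * (i : ℤ) - (j : ℤ) + 1) := by
      rw [Finset.sum_eq_single j]
      · rw [hurwitzMatrix_apply]; simp [Matrix.one_apply]
      · intro m _ hm; simp [Matrix.one_apply, hm]
      · simp
    have hsum2 : ∑ m : Fin (k+1), hurwitzMatrix c (k+1) i m *
        (if (m : ℕ) + 1 = (j : ℕ) ∧ (j : ℕ) % 2 = 1 then -lam else 0)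
        = -(if (j : ℕ) % 2 = 1 then lam * c (2 * (i : ℤ) - (j : ℤ) + 2) else 0) := by
      rcases Fin.eq_zero_or_eq_succ j with hj0 | ⟨j', hj'⟩
      · subst hj0
        rw [Finset.sum_eq_zero]
        · simp
        · intro m _
          have : ¬ ((m : ℕ) + 1 = (0 : ℕ) ∧ (0 : ℕ) % 2 = 1) := by omega
          simp only [Fin.val_zero] at *
          simp [this]
      · subst hj'
        rw [Finset.sum_eq_single (Fin.castSucc j')]
        · rw [hurwitzMatrix_apply]
          have hc : ((Fin.castSucc j' : Fin (k+1)) : ℕ) + 1 = ((Fin.succ j' : Fin (k+1)) : ℕ) := by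
            simp
          by_cases hpar : ((Fin.succ j' : Fin (k+1)) : ℕ) % 2 = 1
          · rw [if_pos ⟨hc, hpar⟩, if_pos hpar]
            have hidx : (2 * (i : ℤ) - ((Fin.castSucc j' : Fin (k+1)) : ℤ) + 1) =
                (2 * (i : ℤ) - ((Fin.succ j' : Fin (k+1)) : ℤ) + 2) := by
              simp only [Fin.coe_castSucc, Fin.val_succ]; push_cast; ring
            rw [hidx]; ring
          · rw [if_neg (fun h => hpar h.2), if_neg hpar]; ring
        · intro m _ hm
          have hcond : ¬ ((m : ℕ) + 1 = ((Fin.succ j' : Fin (k+1)) : ℕ) ∧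
              ((Fin.succ j' : Fin (k+1)) : ℕ) % 2 = 1) := by
            rintro ⟨h, -⟩
            apply hm
            apply Fin.ext
            simp only [Fin.coe_castSucc]
            simp only [Fin.val_succ] at h
            omega
          rw [if_neg hcond, mul_zero]
        · simp
    rw [hsum1, hsum2, hT]
    simp [sub_eq_add_neg]
  have hdetT : (hurwitzMatrix c (k + 1)).det = T.det := by
    rw [← hmul, Matrix.det_mul, hEdet, mul_one]
  rw [hdetT]
  -- expand along the first row
  rw [Matrix.det_succ_row_zero]
  have hrow0 : ∀ j : Fin (k + 1), j ≠ 0 → T 0 j = 0 := by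
    intro j hj
    rw [hT]
    simp only [Matrix.of_apply, Fin.val_zero, Nat.cast_zero, mul_zero, zero_sub]
    have hj1 : 1 ≤ (j : ℕ) := by
      rcases Nat.eq_zero_or_pos (j : ℕ) with h | h
      · exact absurd (Fin.ext h) hj
      · exact h
    by_cases hpar : (j : ℕ) % 2 = 1
    · rcases Nat.eq_or_lt_of_le hj1 with h1 | h1
      · -- j = 1
        have hjv : (j : ℤ) = 1 := by exact_mod_cast h1.symm
        rw [if_pos hpar, hjv]
        norm_num
        rw [hlam]
        field_simp
        ring
      · -- j ≥ 2, odd so j ≥ 3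
        rw [if_pos hpar]
        have hj3 : 3 ≤ (j : ℕ) := by omega
        have e1 : c (-(j : ℤ) + 1) = 0 := by apply hneg; omega
        have e2 : c (-(j : ℤ) + 2) = 0 := by apply hneg; omega
        rw [e1, e2]; ring
    · rw [if_neg hpar]
      have hj2 : 2 ≤ (j : ℕ) := by omega
      have e1 : c (-(j : ℤ) + 1) = 0 := by apply hneg; omega
      rw [e1]; ring
  rw [Finset.sum_eq_single 0]
  · have hT00 : T 0 0 = c 1 := by
      rw [hT]; simp
    rw [hT00]
    simp only [Fin.val_zero, pow_zero, one_mul]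
    congr 1
    -- submatrix equals hurwitzMatrix (routhStep c) k
    have : (T.submatrix Fin.succ (Fin.succAbove 0)) = hurwitzMatrix (routhStep c) k := by
      ext i j
      rw [Matrix.submatrix_apply]
      have hsA : (Fin.succAbove 0 j) = Fin.succ j := by
        simp [Fin.succAbove]
      rw [hsA, hT]
      simp only [Matrix.of_apply, Fin.val_succ]
      rw [hurwitzMatrix_apply]
      set m : ℤ := 2 * (i : ℤ) - (j : ℤ) + 1 with hm
      have hiv : ((Fin.succ i : Fin (k+1)) : ℤ) = (i : ℤ) + 1 := by
        simp only [Fin.val_succ]; push_cast; ring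
      by_cases hpar : (j : ℕ) % 2 = 1
      · -- j odd ⇒ (j+1) % 2 = 0 ⇒ no correction; m even
        have hpar2 : ¬ (((j : ℕ) + 1) % 2 = 1) := by omega
        have hmeven : m % 2 = 0 := by
          have : (j : ℤ) % 2 = 1 := by omega
          omega
        rw [if_neg hpar2]
        rw [routhStep, if_pos hmeven]
        push_cast
        ring_nf
        rw [hm]; congr 1; ring
      · have hpar2 : ((j : ℕ) + 1) % 2 = 1 := by omega
        have hmodd : ¬ (m % 2 = 0) := by
          have : (j : ℤ) % 2 = 0 := by omega
          omega
        rw [if_pos hpar2]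
        rw [routhStep, if_neg hmodd]
        push_cast
        ring_nf
        rw [hm, hlam]; ring_nf
    rw [this]
  · intro j _ hj
    rw [hrow0 j hj]
    ring
  · simp

/-- Even part of the coefficient sequence, as a polynomial in `u = z²`. -/
noncomputable def hpoly (c : ℤ → ℝ) (n : ℕ) : Polynomial ℝ :=
  ∑ m ∈ Finset.range (n + 1), Polynomial.C (c ((n : ℤ) - 2 * m)) * Polynomial.X ^ m

/-- Odd part of the coefficient sequence, as a polynomial in `u = z²`. -/
noncomputable def gpoly (c : ℤ → ℝ) (n : ℕ) : Polynomial ℝ :=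
  ∑ m ∈ Finset.range (n + 1), Polynomial.C (c ((n : ℤ) - 1 - 2 * m)) * Polynomial.X ^ m

lemma hpoly_coeff (c : ℤ → ℝ) (n : ℕ) (hneg : ∀ i : ℤ, i < 0 → c i = 0) (m : ℕ) :
    (hpoly c n).coeff m = c ((n : ℤ) - 2 * m) := by
  rw [hpoly]
  rw [Polynomial.finset_sum_coeff]
  simp only [Polynomial.coeff_C_mul, Polynomial.coeff_X_pow]
  rw [Finset.sum_eq_single m]
  · simp
  · intro k _ hk; simp [hk, Ne.symm hk]
  · intro hm
    simp only [Finset.mem_range, not_lt] at hm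
    have : ((n : ℤ) - 2 * m) < 0 := by omega
    simp [hneg _ this]

lemma gpoly_coeff (c : ℤ → ℝ) (n : ℕ) (hneg : ∀ i : ℤ, i < 0 → c i = 0) (m : ℕ) :
    (gpoly c n).coeff m = c ((n : ℤ) - 1 - 2 * m) := by
  rw [gpoly]
  rw [Polynomial.finset_sum_coeff]
  simp only [Polynomial.coeff_C_mul, Polynomial.coeff_X_pow]
  rw [Finset.sum_eq_single m]
  · simp
  · intro k _ hk; simp [hk, Ne.symm hk]
  · intro hm
    simp only [Finset.mem_range, not_lt] at hm
    have : ((n : ℤ) - 1 - 2 * m) < 0 := by omega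
    simp [hneg _ this]

/-- The invariant: the pair `(h, g)` has a unique common real zero, which is
negative, and the derivatives do not both vanish there. -/
def Good (h g : Polynomial ℝ) : Prop :=
  ∃ u0 : ℝ, u0 < 0 ∧ (∀ u : ℝ, (h.eval u = 0 ∧ g.eval u = 0) ↔ u = u0) ∧
    ¬(h.derivative.eval u0 = 0 ∧ g.derivative.eval u0 = 0)

lemma good_add_X_mul (h g : Polynomial ℝ) (lam : ℝ) (H : Good h g) :
    Good (h + Polynomial.C lam * (Polynomial.X * g)) g := by
  obtain ⟨u0, hu0, hiff, hder⟩ := H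
  have hg0 : g.eval u0 = 0 := ((hiff u0).mpr rfl).2
  have hh0 : h.eval u0 = 0 := ((hiff u0).mpr rfl).1
  refine ⟨u0, hu0, ?_, ?_⟩
  · intro u
    rw [← hiff u]
    constructor
    · rintro ⟨h1, h2⟩
      refine ⟨?_, h2⟩
      simpa [h2] using h1
    · rintro ⟨h1, h2⟩
      refine ⟨?_, h2⟩
      simp [h1, h2]
  · intro ⟨h1, h2⟩
    apply hder
    refine ⟨?_, h2⟩
    have : (h + Polynomial.C lam * (Polynomial.X * g)).derivative.eval u0 =
        h.derivative.eval u0 + lam * (g.eval u0 + u0 * g.derivative.eval u0) := by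
      simp [Polynomial.derivative_mul]
      try ring
    rw [this, hg0, h2] at h1
    simpa using h1

lemma good_add_C_mul (h g : Polynomial ℝ) (lam : ℝ) (H : Good h g) :
    Good h (g + Polynomial.C lam * h) := by
  obtain ⟨u0, hu0, hiff, hder⟩ := H
  have hg0 : g.eval u0 = 0 := ((hiff u0).mpr rfl).2
  have hh0 : h.eval u0 = 0 := ((hiff u0).mpr rfl).1
  refine ⟨u0, hu0, ?_, ?_⟩
  · intro u
    rw [← hiff u]
    constructor
    · rintro ⟨h1, h2⟩
      refine ⟨h1, ?_⟩
      simpa [h1] using h2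
    · rintro ⟨h1, h2⟩
      refine ⟨h1, ?_⟩
      simp [h1, h2]
  · intro ⟨h1, h2⟩
    apply hder
    refine ⟨h1, ?_⟩
    have : (g + Polynomial.C lam * h).derivative.eval u0 =
        g.derivative.eval u0 + lam * h.derivative.eval u0 := by
      simp [Polynomial.derivative_mul]
    rw [this, h1] at h2
    simpa using h2

lemma routhStep_neg (c : ℤ → ℝ) (h1 : c 1 ≠ 0) (hneg : ∀ i : ℤ, i < 0 → c i = 0) :
    ∀ i : ℤ, i < 0 → routhStep c i = 0 := by
  intro i hi
  rw [routhStep]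
  by_cases hp : i % 2 = 0
  · rw [if_pos hp]
    apply hneg; omega
  · rw [if_neg hp]
    rcases eq_or_lt_of_le (show i ≤ -1 by omega) with he | hl
    · rw [he]
      norm_num
      field_simp
      ring
    · rw [hneg (i+1) (by omega), hneg (i+2) (by omega)]
      ring

lemma routhStep_upper (c : ℤ → ℝ) (n : ℕ) (hupper : ∀ i : ℤ, (n : ℤ) < i → c i = 0) :
    ∀ i : ℤ, (n : ℤ) - 1 < i → routhStep c i = 0 := by
  intro i hi
  rw [routhStep]
  rw [hupper (i+1) (by omega), hupper (i+2) (by omega)]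
  simp

lemma relation_even (c : ℤ → ℝ) (n : ℕ) (h1 : c 1 ≠ 0)
    (hneg : ∀ i : ℤ, i < 0 → c i = 0) (hupper : ∀ i : ℤ, ((n : ℤ) + 1) < i → c i = 0)
    (hpar : (n + 1) % 2 = 0) :
    gpoly (routhStep c) n = gpoly c (n + 1) ∧
      hpoly c (n + 1) = hpoly (routhStep c) n +
        Polynomial.C (c 0 / c 1) * (Polynomial.X * gpoly (routhStep c) n) := by
  have hnegt := routhStep_neg c h1 hneg
  constructor
  · ext m
    rw [gpoly_coeff _ _ hnegt, gpoly_coeff _ _ hneg]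
    rw [routhStep, if_pos (by omega)]
    congr 1; push_cast; ring
  · ext m
    rw [Polynomial.coeff_add, Polynomial.coeff_C_mul, hpoly_coeff _ _ hneg,
      hpoly_coeff _ _ hnegt]
    rw [routhStep, if_neg (by omega)]
    cases m with
    | zero =>
      rw [Polynomial.mul_coeff_zero]
      simp only [Polynomial.coeff_X_zero, zero_mul, mul_zero, add_zero]
      rw [hupper ((n : ℤ) - 2 * ((0:ℕ):ℤ) + 2) (by push_cast; omega)]
      push_cast; ring_nf
    | succ m' =>
      rw [Polynomial.coeff_X_mul, gpoly_coeff _ _ hnegt]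
      rw [routhStep, if_pos (by omega)]
      push_cast
      ring_nf

lemma relation_odd (c : ℤ → ℝ) (n : ℕ) (h1 : c 1 ≠ 0)
    (hneg : ∀ i : ℤ, i < 0 → c i = 0)
    (hpar : (n + 1) % 2 = 1) :
    hpoly (routhStep c) n = hpoly c (n + 1) ∧
      gpoly c (n + 1) = gpoly (routhStep c) n +
        Polynomial.C (c 0 / c 1) * hpoly (routhStep c) n := by
  have hnegt := routhStep_neg c h1 hneg
  constructor
  · ext m
    rw [hpoly_coeff _ _ hnegt, hpoly_coeff _ _ hneg]
    rw [routhStep, if_pos (by omega)]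
    congr 1; push_cast; ring
  · ext m
    rw [Polynomial.coeff_add, Polynomial.coeff_C_mul, gpoly_coeff _ _ hneg,
      gpoly_coeff _ _ hnegt, hpoly_coeff _ _ hnegt]
    rw [routhStep, if_neg (by omega), routhStep, if_pos (by omega)]
    push_cast
    ring_nf

lemma main_induction (n : ℕ) (hn : 2 ≤ n) : ∀ c : ℤ → ℝ,
    (∀ i : ℤ, i < 0 → c i = 0) → (∀ i : ℤ, (n : ℤ) < i → c i = 0) →
    0 < c 0 → 0 < c ((n : ℕ) : ℤ) →
    (∀ l : ℕ, 1 ≤ l → l ≤ n - 2 → 0 < (hurwitzMatrix c l).det) →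
    (hurwitzMatrix c (n - 1)).det = 0 →
    Good (hpoly c n) (gpoly c n) := by
  induction n, hn using Nat.le_induction with
  | base =>
    intro c hneg hupper hc0 hcn _ hzero
    have hc1 : c 1 = 0 := by
      have := det_hurwitz_one c
      rw [← this]; simpa using hzero
    -- gpoly c 2 = 0
    have hg : gpoly c 2 = 0 := by
      ext m
      rw [gpoly_coeff _ _ hneg]
      cases m with
      | zero => simpa using hc1
      | succ m' =>
        rw [hneg _ (by push_cast; omega)]
        simp
    -- hpoly c 2 = C (c 2) + C (c 0) * X
    have hh : hpoly c 2 = Polynomial.C (c 2) + Polynomial.C (c 0) * Polynomial.X := by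
      ext m
      rw [hpoly_coeff _ _ hneg]
      match m with
      | 0 => norm_num
      | 1 => norm_num
      | (m' + 2) =>
        rw [hneg _ (by push_cast; omega)]
        simp only [Polynomial.coeff_add, Polynomial.coeff_C, Polynomial.coeff_C_mul,
          Polynomial.coeff_X]
        norm_num
    refine ⟨-(c 2 / c 0), ?_, ?_, ?_⟩
    · have : 0 < c 2 / c 0 := div_pos (by exact_mod_cast hcn) hc0
      linarith
    · intro u
      rw [hh, hg]
      simp only [Polynomial.eval_add, Polynomial.eval_C, Polynomial.eval_mul,
        Polynomial.eval_X, Polynomial.eval_zero, and_true]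
      constructor
      · intro h
        field_simp
        linarith
      · intro h
        rw [h]
        field_simp
        try ring
    · rw [hh, hg]
      intro ⟨h1, _⟩
      simp only [Polynomial.derivative_add, Polynomial.derivative_C,
        Polynomial.derivative_mul, Polynomial.derivative_X] at h1
      simp at h1
      exact ne_of_gt hc0 h1
  | succ n hn IH =>
    intro c hneg hupper hc0 hcn hpos hzero
    have hc1 : 0 < c 1 := by
      have h := hpos 1 le_rfl (by omega)
      rwa [det_hurwitz_one] at h
    have hc1' : c 1 ≠ 0 := ne_of_gt hc1
    set ct := routhStep c with hct
    have hnegt : ∀ i : ℤ, i < 0 → ct i = 0 := routhStep_neg c hc1' hneg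
    have huppert : ∀ i : ℤ, (n : ℤ) < i → ct i = 0 := by
      intro i hi
      apply routhStep_upper c (n + 1) (by exact_mod_cast hupper)
      push_cast; omega
    have hct0 : ct 0 = c 1 := by
      rw [hct, routhStep]
      norm_num
    have hctn : ct ((n : ℕ) : ℤ) = c ((n : ℤ) + 1) := by
      rw [hct, routhStep]
      by_cases hp : (n : ℤ) % 2 = 0
      · rw [if_pos hp]
      · rw [if_neg hp, hupper ((n : ℤ) + 2) (by push_cast; omega)]
        ring
    have hposn : 0 < c ((n : ℤ) + 1) := by
      have : (((n + 1 : ℕ) : ℤ)) = (n : ℤ) + 1 := by push_cast; ring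
      rwa [this] at hcn
    have hpost : ∀ l : ℕ, 1 ≤ l → l ≤ n - 2 → 0 < (hurwitzMatrix ct l).det := by
      intro l hl1 hl2
      have hd := det_routh c hc1' hneg l
      have hp : 0 < (hurwitzMatrix c (l + 1)).det := hpos (l + 1) (by omega) (by omega)
      rw [hd] at hp
      rcases mul_pos_iff.mp hp with h | h
      · exact h.2
      · linarith [h.1]
    have hzerot : (hurwitzMatrix ct (n - 1)).det = 0 := by
      have hd := det_routh c hc1' hneg (n - 1)
      have : n - 1 + 1 = n := by omega
      rw [this] at hd
      have hz : (hurwitzMatrix c n).det = 0 := by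
        have : (n + 1) - 1 = n := by omega
        rwa [this] at hzero
      rw [hz] at hd
      rcases mul_eq_zero.mp hd.symm with h | h
      · exact absurd h hc1'
      · exact h
    have hGood : Good (hpoly ct n) (gpoly ct n) :=
      IH ct hnegt huppert (by rw [hct0]; exact hc1) (by rw [hctn]; exact hposn) hpost hzerot
    rcases Nat.even_or_odd (n + 1) with hpar | hpar
    · obtain ⟨hgeq, hheq⟩ := relation_even c n hc1' hneg
        (by exact_mod_cast hupper) (Nat.even_iff.mp hpar)
      rw [← hgeq, hheq]
      exact good_add_X_mul _ _ _ hGood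
    · obtain ⟨hheq, hgeq⟩ := relation_odd c n hc1' hneg (Nat.odd_iff.mp hpar)
      rw [← hheq, hgeq]
      exact good_add_C_mul _ _ _ hGood

lemma coeff_comp_X_sq (q : Polynomial ℝ) (k : ℕ) :
    (q.comp (Polynomial.X ^ 2)).coeff k = if k % 2 = 0 then q.coeff (k / 2) else 0 := by
  rw [Polynomial.comp_eq_sum_left, Polynomial.sum_def, Polynomial.finset_sum_coeff]
  simp only [Polynomial.coeff_C_mul, ← pow_mul, Polynomial.coeff_X_pow]
  rw [Finset.sum_eq_single (k / 2)]
  · by_cases hk : k % 2 = 0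
    · rw [if_pos (by omega : k = 2 * (k / 2)), if_pos hk]
      ring
    · rw [if_neg (by omega), if_neg hk]
      ring
  · intro e _ he
    have : ¬(k = 2 * e) := by
      intro hke; apply he; omega
    rw [if_neg this]; ring
  · intro h
    rw [Polynomial.notMem_support_iff.mp h]
    simp

lemma aux_complex_zero (a bb t : ℝ) :
    ((a : ℂ) + Complex.I * t * bb = 0) ↔ (a = 0 ∧ t * bb = 0) := by
  constructor
  · intro h
    have hre := congrArg Complex.re h
    have him := congrArg Complex.im h
    simp at hre him
    refine ⟨hre, ?_⟩
    rcases him with h | h <;> simp [h]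
  · rintro ⟨h1, h2⟩
    rw [h1]
    have : (Complex.I * t) * bb = ((t * bb : ℝ) : ℂ) * Complex.I := by
      push_cast; ring
    rw [this, h2]
    simp

/-- Let `p(z) = z^s + b_1 z^(s-1) + … + b_s` be a monic real polynomial of degree
`s ≥ 2` whose Hurwitz determinants satisfy `b_s > 0`,
`det G_1 > 0, …, det G_(s-2) > 0` and `det G_(s-1) = 0`.  Then there exists
`ω > 0` such that `iω` and `−iω` are simple roots of `p` (over `ℂ`), and `p` has
no other roots on the imaginary axis. -/
theorem hurwitz_single_imaginary_pair (s : ℕ) (hs : 2 ≤ s) (p : Polynomial ℝ)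
    (hmonic : p.Monic) (hdeg : p.natDegree = s)
    (b : ℤ → ℝ)
    (hb : ∀ i : ℤ, b i = if 0 ≤ i ∧ i ≤ (s : ℤ) then p.coeff (s - i.toNat) else 0)
    (hbs : 0 < p.coeff 0)
    (hpos : ∀ l : ℕ, 1 ≤ l → l ≤ s - 2 → 0 < (hurwitzMatrix b l).det)
    (hzero : (hurwitzMatrix b (s - 1)).det = 0) :
    ∃ ω : ℝ, 0 < ω ∧
      (p.map (algebraMap ℝ ℂ)).rootMultiplicity (Complex.I * ω) = 1 ∧
      (p.map (algebraMap ℝ ℂ)).rootMultiplicity (-(Complex.I * ω)) = 1 ∧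
      ∀ z : ℂ, z.re = 0 → (p.map (algebraMap ℝ ℂ)).IsRoot z →
        z = Complex.I * ω ∨ z = -(Complex.I * ω) := by
  classical
  have hp0 : p ≠ 0 := hmonic.ne_zero
  -- support of b
  have hneg : ∀ i : ℤ, i < 0 → b i = 0 := by
    intro i hi; rw [hb]
    rw [if_neg (by omega)]
  have hupper : ∀ i : ℤ, (s : ℤ) < i → b i = 0 := by
    intro i hi; rw [hb]
    rw [if_neg (by omega)]
  have hb0 : b 0 = 1 := by
    rw [hb, if_pos (by constructor <;> omega)]
    simpa using (by rw [← hdeg]; exact hmonic.coeff_natDegree : p.coeff s = 1)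
  have hbsval : b ((s : ℕ) : ℤ) = p.coeff 0 := by
    rw [hb, if_pos (by constructor <;> omega)]
    congr 1
    omega
  -- the invariant
  have hGood : Good (hpoly b s) (gpoly b s) := by
    apply main_induction s hs b hneg hupper (by rw [hb0]; norm_num)
      (by rw [hbsval]; exact hbs) hpos hzero
  obtain ⟨u0, hu0, hiff, hder⟩ := hGood
  have hcz : (hpoly b s).eval u0 = 0 ∧ (gpoly b s).eval u0 = 0 := (hiff u0).mpr rfl
  -- coefficient links
  have hlinkh : ∀ m : ℕ, (hpoly b s).coeff m = p.coeff (2 * m) := by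
    intro m
    rw [hpoly_coeff _ _ hneg, hb]
    by_cases hc : 0 ≤ (s : ℤ) - 2 * m ∧ (s : ℤ) - 2 * m ≤ (s : ℤ)
    · rw [if_pos hc]
      congr 1
      omega
    · rw [if_neg hc]
      have hlt : (s : ℤ) < 2 * m := by
        by_contra hge
        exact hc ⟨by omega, by omega⟩
      refine (Polynomial.coeff_eq_zero_of_natDegree_lt ?_).symm
      rw [hdeg]; omega
  have hlinkg : ∀ m : ℕ, (gpoly b s).coeff m = p.coeff (2 * m + 1) := by
    intro m
    rw [gpoly_coeff _ _ hneg, hb]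
    by_cases hc : 0 ≤ (s : ℤ) - 1 - 2 * m ∧ (s : ℤ) - 1 - 2 * m ≤ (s : ℤ)
    · rw [if_pos hc]
      congr 1
      omega
    · rw [if_neg hc]
      have hlt : (s : ℤ) < 2 * m + 1 := by
        by_contra hge
        exact hc ⟨by omega, by omega⟩
      refine (Polynomial.coeff_eq_zero_of_natDegree_lt ?_).symm
      rw [hdeg]; omega
  -- even-odd decomposition
  have hdecomp : p = (hpoly b s).comp (Polynomial.X ^ 2) +
      Polynomial.X * (gpoly b s).comp (Polynomial.X ^ 2) := by
    ext k
    rw [Polynomial.coeff_add, coeff_comp_X_sq]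
    cases k with
    | zero =>
      rw [Polynomial.mul_coeff_zero]
      simp only [Polynomial.coeff_X_zero, zero_mul, add_zero]
      simp [hlinkh 0]
    | succ k' =>
      rw [Polynomial.coeff_X_mul, coeff_comp_X_sq]
      by_cases hk : (k' + 1) % 2 = 0
      · rw [if_pos hk, if_neg (by omega), hlinkh, add_zero]
        congr 1
        omega
      · rw [if_neg hk, if_pos (by omega), hlinkg, zero_add]
        congr 1
        omega
  set f := algebraMap ℝ ℂ with hf
  set P := p.map f with hP
  have hPne : P ≠ 0 := (hmonic.map f).ne_zero
  have hPdecomp : P = ((hpoly b s).map f).comp (Polynomial.X ^ 2) +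
      Polynomial.X * ((gpoly b s).map f).comp (Polynomial.X ^ 2) := by
    rw [hP, hdecomp]
    simp [Polynomial.map_comp]
  have hevalmap : ∀ (q : Polynomial ℝ) (x : ℝ), (q.map f).eval ((x : ℝ) : ℂ) =
      ((q.eval x : ℝ) : ℂ) := by
    intro q x
    rw [show ((x : ℝ) : ℂ) = f x from rfl, Polynomial.eval_map, Polynomial.eval₂_at_apply]
    rfl
  have hsq : ∀ t : ℝ, (Complex.I * (t : ℂ)) ^ 2 = ((-(t ^ 2) : ℝ) : ℂ) := by
    intro t
    rw [mul_pow, Complex.I_sq]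
    push_cast
    ring
  have heval : ∀ t : ℝ, P.eval (Complex.I * t) =
      (((hpoly b s).eval (-(t ^ 2)) : ℝ) : ℂ) +
        Complex.I * t * (((gpoly b s).eval (-(t ^ 2)) : ℝ) : ℂ) := by
    intro t
    rw [hPdecomp]
    simp only [Polynomial.eval_add, Polynomial.eval_mul, Polynomial.eval_comp,
      Polynomial.eval_X, Polynomial.eval_pow]
    rw [hsq, hevalmap, hevalmap]
  -- derivative evaluation
  have hdereval : ∀ t : ℝ, P.derivative.eval (Complex.I * t) =
      (((gpoly b s).eval (-(t ^ 2)) - 2 * t ^ 2 * (gpoly b s).derivative.eval (-(t ^ 2)) : ℝ) : ℂ)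
        + Complex.I * t * ((2 * (hpoly b s).derivative.eval (-(t ^ 2)) : ℝ) : ℂ) := by
    intro t
    rw [hPdecomp]
    rw [Polynomial.derivative_add, Polynomial.derivative_comp, Polynomial.derivative_mul,
      Polynomial.derivative_comp, Polynomial.derivative_X]
    simp only [Polynomial.derivative_X_pow, Polynomial.eval_add, Polynomial.eval_mul,
      Polynomial.eval_comp, Polynomial.eval_X, Polynomial.eval_pow, Polynomial.eval_one,
      one_mul, Polynomial.eval_natCast]
    rw [hsq, Polynomial.derivative_map, Polynomial.derivative_map]
    rw [hevalmap, hevalmap, hevalmap]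
    simp only [Polynomial.eval_C, pow_one]
    push_cast
    ring_nf
    rw [Complex.I_sq]
    ring
  -- ω
  set ω : ℝ := Real.sqrt (-u0) with hω
  have hωpos : 0 < ω := Real.sqrt_pos.mpr (by linarith)
  have hω2 : ω ^ 2 = -u0 := Real.sq_sqrt (by linarith)
  have hωu : -(ω ^ 2) = u0 := by rw [hω2]; ring
  -- a root criterion along the imaginary axis
  have hroot_iff : ∀ t : ℝ, P.eval (Complex.I * t) = 0 ↔
      ((hpoly b s).eval (-(t ^ 2)) = 0 ∧ t * (gpoly b s).eval (-(t ^ 2)) = 0) := by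
    intro t
    rw [heval t]
    exact aux_complex_zero _ _ _
  have hroots : ∀ t : ℝ, t ≠ 0 → (P.eval (Complex.I * t) = 0 ↔ -(t ^ 2) = u0) := by
    intro t ht
    rw [hroot_iff]
    constructor
    · rintro ⟨h1, h2⟩
      apply (hiff (-(t ^ 2))).mp
      refine ⟨h1, ?_⟩
      rcases mul_eq_zero.mp h2 with h | h
      · exact absurd h ht
      · exact h
    · intro h
      rw [h]
      exact ⟨hcz.1, by rw [hcz.2]; ring⟩
  -- simplicity
  have hder_ne : ∀ t : ℝ, t ≠ 0 → -(t ^ 2) = u0 → P.derivative.eval (Complex.I * t) ≠ 0 := by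
    intro t ht hu h0
    rw [hdereval t, hu] at h0
    obtain ⟨h1, h2⟩ := (aux_complex_zero _ _ _).mp h0
    apply hder
    constructor
    · rcases mul_eq_zero.mp h2 with h | h
      · exact absurd h ht
      · linarith
    · have h3 : (2 * t ^ 2) * (gpoly b s).derivative.eval u0 = 0 := by
        have := hcz.2
        nlinarith [h1]
      rcases mul_eq_zero.mp h3 with h | h
      · exfalso
        apply ht
        have ht2 : t ^ 2 = 0 := by linarith
        exact pow_eq_zero_iff (by norm_num) |>.mp ht2
      · exact h
  -- multiplicity-one criterion
  have hmult1 : ∀ z : ℂ, P.IsRoot z → ¬(P.derivative.IsRoot z) → P.rootMultiplicity z = 1 := by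
    intro z hz hz'
    have h1 : 1 ≤ P.rootMultiplicity z := (Polynomial.rootMultiplicity_pos hPne).mpr hz
    have h2 : ¬ (2 ≤ P.rootMultiplicity z) := by
      intro hge
      have hdvd : (Polynomial.X - Polynomial.C z) ^ 2 ∣ P :=
        dvd_trans (pow_dvd_pow _ hge) (Polynomial.pow_rootMultiplicity_dvd P z)
      obtain ⟨Q, hQ⟩ := hdvd
      apply hz'
      rw [Polynomial.IsRoot, hQ, Polynomial.derivative_mul]
      simp [Polynomial.derivative_pow]
    omega
  have hωne : ω ≠ 0 := ne_of_gt hωpos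
  have hωu' : -((-ω) ^ 2) = u0 := by rw [neg_sq]; exact hωu
  have hneg_eq : -(Complex.I * (ω : ℂ)) = Complex.I * ((-ω : ℝ) : ℂ) := by
    push_cast; ring
  have hroot_ω : P.IsRoot (Complex.I * (ω : ℂ)) := (hroots ω hωne).mpr hωu
  have hroot_ω' : P.IsRoot (Complex.I * ((-ω : ℝ) : ℂ)) := (hroots (-ω) (by simpa using hωne)).mpr hωu'
  refine ⟨ω, hωpos, ?_, ?_, ?_⟩
  · exact hmult1 _ hroot_ω (hder_ne ω hωne hωu)
  · rw [hneg_eq]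
    exact hmult1 _ hroot_ω' (hder_ne (-ω) (by simpa using hωne) hωu')
  · intro z hre hz
    have hz' : z = Complex.I * ((z.im : ℝ) : ℂ) := by
      simp [Complex.ext_iff, hre]
    by_cases ht : z.im = 0
    · exfalso
      rw [hz', ht] at hz
      have : P.eval 0 = 0 := by simpa using hz
      rw [← Polynomial.coeff_zero_eq_eval_zero, hP, Polynomial.coeff_map] at this
      rw [hf] at this
      simp only [Complex.coe_algebraMap] at this
      exact ne_of_gt hbs (by exact_mod_cast this)
    · rw [hz'] at hz
      have hu : -((z.im : ℝ) ^ 2) = u0 := (hroots z.im ht).mp hz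
      have ht2 : (z.im - ω) * (z.im + ω) = 0 := by
        have : z.im ^ 2 = ω ^ 2 := by rw [hω2]; linarith
        nlinarith [this]
      rcases mul_eq_zero.mp ht2 with h | h
      · left
        rw [hz']
        have : z.im = ω := by linarith
        rw [this]
      · right
        rw [hz', hneg_eq]
        have : z.im = -ω := by linarith
        rw [this]
end

section
/- Let k_1, …, k_8 > 0 be rate constants, λ > 0, and x_1, x_2 > 0 arbitrary. Define x_3 = λ/(k_1 x_1), x_4 = λ/(k_3 x_1), x_5 = λ/(k_7 x_2), x_6 = λ/(k_5 x_2), x_7 = λ/k_2, x_8 = λ/k_4, x_9 = λ/k_8, x_10 = λ/k_6. Then g_k(x) = 0; in particular every choice of λ > 0, x_1 > 0, x_2 > 0 yields a positive steady state of the mass-action ODE system. -/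
open Matrix

/-- The mass-action vector field of the irreversible cyclic distributive
double-phosphorylation network: `gvec k x i` is the component `g_(i+1)` for
rate constants `k = (k_1, …, k_8)` (0-indexed) and concentrations
`x = (x_1, …, x_10)` (0-indexed). -/
def gvec (k : Fin 8 → ℝ) (x : Fin 10 → ℝ) : Fin 10 → ℝ :=
  ![ -(k 0) * x 0 * x 2 - k 2 * x 0 * x 3 + k 1 * x 6 + k 3 * x 7,
     k 5 * x 9 - k 6 * x 1 * x 4 - k 4 * x 1 * x 5 + k 7 * x 8,
     -(k 0) * x 0 * x 2 + k 7 * x 8,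
     -(k 2) * x 0 * x 3 + k 1 * x 6,
     k 5 * x 9 - k 6 * x 1 * x 4,
     -(k 4) * x 1 * x 5 + k 3 * x 7,
     k 0 * x 0 * x 2 - k 1 * x 6,
     k 2 * x 0 * x 3 - k 3 * x 7,
     k 6 * x 1 * x 4 - k 7 * x 8,
     -(k 5) * x 9 + k 4 * x 1 * x 5 ]

/-- For any positive rate constants `k_1, …, k_8`, any `λ > 0` and any
`x_1, x_2 > 0`, setting `x_3 = λ/(k_1 x_1)`, `x_4 = λ/(k_3 x_1)`,
`x_5 = λ/(k_7 x_2)`, `x_6 = λ/(k_5 x_2)`, `x_7 = λ/k_2`, `x_8 = λ/k_4`,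
`x_9 = λ/k_8`, `x_10 = λ/k_6` yields `g_k(x) = 0`; in particular every such
choice gives a positive steady state of the mass-action system. -/
theorem steady_state_parameterization
    (k : Fin 8 → ℝ) (hk : ∀ i, 0 < k i) (lam : ℝ) (hlam : 0 < lam)
    (x1 x2 : ℝ) (hx1 : 0 < x1) (hx2 : 0 < x2)
    (x : Fin 10 → ℝ)
    (hx : x = ![x1, x2, lam / (k 0 * x1), lam / (k 2 * x1),
                lam / (k 6 * x2), lam / (k 4 * x2),
                lam / k 1, lam / k 3, lam / k 7, lam / k 5]) :
    gvec k x = 0 ∧ ∀ i, 0 < x i := by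
  have e0 : x 0 = x1 := by rw [hx]; rfl
  have e1 : x 1 = x2 := by rw [hx]; rfl
  have e2 : x 2 = lam / (k 0 * x1) := by rw [hx]; rfl
  have e3 : x 3 = lam / (k 2 * x1) := by rw [hx]; rfl
  have e4 : x 4 = lam / (k 6 * x2) := by rw [hx]; rfl
  have e5 : x 5 = lam / (k 4 * x2) := by rw [hx]; rfl
  have e6 : x 6 = lam / k 1 := by rw [hx]; rfl
  have e7 : x 7 = lam / k 3 := by rw [hx]; rfl
  have e8 : x 8 = lam / k 7 := by rw [hx]; rfl
  have e9 : x 9 = lam / k 5 := by rw [hx]; rfl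
  have h0 := (hk 0).ne'
  have h1 := (hk 1).ne'
  have h2 := (hk 2).ne'
  have h3 := (hk 3).ne'
  have h4 := (hk 4).ne'
  have h5 := (hk 5).ne'
  have h6 := (hk 6).ne'
  have h7 := (hk 7).ne'
  have hx1' := hx1.ne'
  have hx2' := hx2.ne'
  have g0 : gvec k x 0 = 0 := by
    rw [show gvec k x 0 = -(k 0) * x 0 * x 2 - k 2 * x 0 * x 3 + k 1 * x 6 + k 3 * x 7 from rfl]
    simp only [e0, e1, e2, e3, e4, e5, e6, e7, e8, e9]
    field_simp
    try ring
  have g1 : gvec k x 1 = 0 := by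
    rw [show gvec k x 1 = k 5 * x 9 - k 6 * x 1 * x 4 - k 4 * x 1 * x 5 + k 7 * x 8 from rfl]
    simp only [e0, e1, e2, e3, e4, e5, e6, e7, e8, e9]
    field_simp
    try ring
  have g2 : gvec k x 2 = 0 := by
    rw [show gvec k x 2 = -(k 0) * x 0 * x 2 + k 7 * x 8 from rfl]
    simp only [e0, e1, e2, e3, e4, e5, e6, e7, e8, e9]
    field_simp
    try ring
  have g3 : gvec k x 3 = 0 := by
    rw [show gvec k x 3 = -(k 2) * x 0 * x 3 + k 1 * x 6 from rfl]
    simp only [e0, e1, e2, e3, e4, e5, e6, e7, e8, e9]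
    field_simp
    try ring
  have g4 : gvec k x 4 = 0 := by
    rw [show gvec k x 4 = k 5 * x 9 - k 6 * x 1 * x 4 from rfl]
    simp only [e0, e1, e2, e3, e4, e5, e6, e7, e8, e9]
    field_simp
    try ring
  have g5 : gvec k x 5 = 0 := by
    rw [show gvec k x 5 = -(k 4) * x 1 * x 5 + k 3 * x 7 from rfl]
    simp only [e0, e1, e2, e3, e4, e5, e6, e7, e8, e9]
    field_simp
    try ring
  have g6 : gvec k x 6 = 0 := by
    rw [show gvec k x 6 = k 0 * x 0 * x 2 - k 1 * x 6 from rfl]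
    simp only [e0, e1, e2, e3, e4, e5, e6, e7, e8, e9]
    field_simp
    try ring
  have g7 : gvec k x 7 = 0 := by
    rw [show gvec k x 7 = k 2 * x 0 * x 3 - k 3 * x 7 from rfl]
    simp only [e0, e1, e2, e3, e4, e5, e6, e7, e8, e9]
    field_simp
    try ring
  have g8 : gvec k x 8 = 0 := by
    rw [show gvec k x 8 = k 6 * x 1 * x 4 - k 7 * x 8 from rfl]
    simp only [e0, e1, e2, e3, e4, e5, e6, e7, e8, e9]
    field_simp
    try ring
  have g9 : gvec k x 9 = 0 := by
    rw [show gvec k x 9 = -(k 5) * x 9 + k 4 * x 1 * x 5 from rfl]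
    simp only [e0, e1, e2, e3, e4, e5, e6, e7, e8, e9]
    field_simp
    try ring
  refine ⟨funext fun i => ?_, fun i => ?_⟩
  · fin_cases i
    exacts [g0, g1, g2, g3, g4, g5, g6, g7, g8, g9]
  · have p0 : 0 < x 0 := by rw [e0]; exact hx1
    have p1 : 0 < x 1 := by rw [e1]; exact hx2
    have p2 : 0 < x 2 := by rw [e2]; exact div_pos hlam (mul_pos (hk 0) hx1)
    have p3 : 0 < x 3 := by rw [e3]; exact div_pos hlam (mul_pos (hk 2) hx1)
    have p4 : 0 < x 4 := by rw [e4]; exact div_pos hlam (mul_pos (hk 6) hx2)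
    have p5 : 0 < x 5 := by rw [e5]; exact div_pos hlam (mul_pos (hk 4) hx2)
    have p6 : 0 < x 6 := by rw [e6]; exact div_pos hlam (hk 1)
    have p7 : 0 < x 7 := by rw [e7]; exact div_pos hlam (hk 3)
    have p8 : 0 < x 8 := by rw [e8]; exact div_pos hlam (hk 7)
    have p9 : 0 < x 9 := by rw [e9]; exact div_pos hlam (hk 5)
    fin_cases i
    exacts [p0, p1, p2, p3, p4, p5, p6, p7, p8, p9]
end
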